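/- If (Qa, Qb) ∈ [0,1]² is reduced form implementable and Qa ≥ Qb, then there exist nonnegative reals α₀,...,αₙ with ∑_{j=0}^n αⱼ ≤ 1 such that Qa = ∑_{j=0}^n αⱼ·Q⁺ⱼ(a) and Qb = ∑_{j=0}^n αⱼ·Q⁺ⱼ(b); that is, (Qa, Qb) is implemented by a convex combination of qualified majority rules and the constant rule that always selects b (whose interim probabilities are (0,0)). -/

import Mathlib

open Finset

noncomputable def Tc (θ : ℝ) (k : ℕ) : ℝ := min 1 (max 0 ((k : ℝ) + 1 - θ))

lemma Tc_nonneg (θ : ℝ) (k : ℕ) : 0 ≤ Tc θ k :=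
  le_min zero_le_one (le_max_left _ _)

lemma Tc_le_one (θ : ℝ) (k : ℕ) : Tc θ k ≤ 1 := min_le_left _ _

lemma Tc_mono (θ : ℝ) {k l : ℕ} (h : k ≤ l) : Tc θ k ≤ Tc θ l := by
  have : (k : ℝ) ≤ l := by exact_mod_cast h
  exact min_le_min le_rfl (max_le_max le_rfl (by linarith))

lemma Tc_anti {θ θ' : ℝ} (h : θ ≤ θ') (k : ℕ) : Tc θ' k ≤ Tc θ k := by
  unfold Tc
  exact min_le_min le_rfl (max_le_max le_rfl (by linarith))

lemma Tc_cont (k : ℕ) : Continuous fun θ => Tc θ k := by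
  unfold Tc
  exact continuous_const.min (continuous_const.max (by continuity))

lemma Tc_eq_zero {θ : ℝ} {k : ℕ} (h : (k : ℝ) + 1 ≤ θ) : Tc θ k = 0 := by
  unfold Tc
  rw [max_eq_left (by linarith), min_eq_right zero_le_one]

lemma Tc_eq_one {θ : ℝ} {k : ℕ} (h : θ ≤ (k : ℝ)) : Tc θ k = 1 := by
  unfold Tc
  rw [max_eq_right (by linarith), min_eq_left (by linarith)]

lemma sum_swap_aux (n : ℕ) (F : ℕ → ℕ → ℝ) :
    ∑ j ∈ range (n + 1), ∑ k ∈ Icc j n, F j k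
      = ∑ k ∈ range (n + 1), ∑ j ∈ range (k + 1), F j k := by
  refine Finset.sum_comm' ?_
  intro j k
  simp only [mem_range, mem_Icc, Nat.lt_succ_iff]
  omega

set_option maxHeartbeats 1000000 in
/-- Implication (2) ⇒ (3) of Theorem 3: if `(Qa, Qb) ∈ [0,1]²` is reduced form
implementable and `Qa ≥ Qb`, then `(Qa, Qb)` is a convex combination of the interim
allocation probabilities of qualified majority rules and the constant rule that
always selects `b` (whose interim probabilities are `(0,0)`). -/
theorem implementable_mono_convex_combination_of_qualified_majorities
    (n : ℕ) (hn : 2 ≤ n) (π : ℝ) (hπ0 : 0 < π) (hπ1 : π < 1)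
    (B : ℕ → ℝ) (hBnonneg : ∀ k ≤ n, 0 ≤ B k)
    (hBsum : ∑ k ∈ range (n + 1), B k = 1)
    (hBmean : ∑ k ∈ range (n + 1), (k : ℝ) * B k = n * π)
    (Qa Qb : ℝ) (hQa : Qa ∈ Set.Icc (0 : ℝ) 1) (hQb : Qb ∈ Set.Icc (0 : ℝ) 1)
    (himpl : ∃ q : ℕ → ℝ, (∀ k ≤ n, 0 ≤ q k ∧ q k ≤ 1) ∧
      (1 / (n * π)) * ∑ k ∈ range (n + 1), (k : ℝ) * q k * B k = Qa ∧
      (1 / (n * (1 - π))) * ∑ k ∈ range (n + 1), ((n : ℝ) - k) * q k * B k = Qb)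
    (hmono : Qa ≥ Qb) :
    ∃ α : ℕ → ℝ,
      (∀ j ≤ n, 0 ≤ α j) ∧
      (∑ j ∈ range (n + 1), α j) ≤ 1 ∧
      Qa = ∑ j ∈ range (n + 1),
              α j * ((1 / (n * π)) * ∑ k ∈ Icc j n, (k : ℝ) * B k) ∧
      Qb = ∑ j ∈ range (n + 1),
              α j * ((1 / (n * (1 - π))) * ∑ k ∈ Icc j n, ((n : ℝ) - k) * B k) := by
  obtain ⟨q, hq, hQaEq, hQbEq⟩ := himpl
  obtain ⟨hQa0, hQa1⟩ := hQa
  obtain ⟨hQb0, hQb1⟩ := hQb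
  have hn0 : (0 : ℝ) < n := by exact_mod_cast (by omega : 0 < n)
  have hπ1' : (0 : ℝ) < 1 - π := by linarith
  have hnπ : (0 : ℝ) < n * π := by positivity
  have hnπ' : (0 : ℝ) < n * (1 - π) := by positivity
  -- the transformed "measures"
  set x : ℕ → ℝ := fun k => 1 / (n * π) * ((k : ℝ) * B k) with hxdef
  set y : ℕ → ℝ := fun k => 1 / (n * (1 - π)) * (((n : ℝ) - k) * B k) with hydef
  have hxnn : ∀ k ∈ range (n + 1), 0 ≤ x k := by
    intro k hk
    rw [mem_range, Nat.lt_succ_iff] at hk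
    have := hBnonneg k hk
    have : (0:ℝ) ≤ (k : ℝ) * B k := by positivity
    rw [hxdef]; positivity
  have hynn : ∀ k ∈ range (n + 1), 0 ≤ y k := by
    intro k hk
    rw [mem_range, Nat.lt_succ_iff] at hk
    have h1 := hBnonneg k hk
    have h2 : (0:ℝ) ≤ (n : ℝ) - k := by
      have : (k : ℝ) ≤ n := by exact_mod_cast hk
      linarith
    rw [hydef]
    have : (0:ℝ) ≤ ((n : ℝ) - k) * B k := mul_nonneg h2 h1
    positivity
  have hsumx : ∑ k ∈ range (n + 1), x k = 1 := by
    rw [hxdef, ← Finset.mul_sum, hBmean]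
    field_simp
  have hsumy : ∑ k ∈ range (n + 1), y k = 1 := by
    rw [hydef, ← Finset.mul_sum]
    have : ∑ k ∈ range (n + 1), ((n : ℝ) - k) * B k
        = (n : ℝ) * (∑ k ∈ range (n + 1), B k) - ∑ k ∈ range (n + 1), (k : ℝ) * B k := by
      rw [Finset.mul_sum, ← Finset.sum_sub_distrib]
      exact Finset.sum_congr rfl fun k _ => by ring
    rw [this, hBsum, hBmean]
    field_simp
  have hQax : ∑ k ∈ range (n + 1), q k * x k = Qa := by
    rw [← hQaEq, Finset.mul_sum]
    exact Finset.sum_congr rfl fun k _ => by rw [hxdef]; ring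
  have hQby : ∑ k ∈ range (n + 1), q k * y k = Qb := by
    rw [← hQbEq, Finset.mul_sum]
    exact Finset.sum_congr rfl fun k _ => by rw [hydef]; ring
  -- interim probabilities of the fractional threshold rules
  set Ga : ℝ → ℝ := fun θ => ∑ k ∈ range (n + 1), Tc θ k * x k with hGadef
  set Gb : ℝ → ℝ := fun θ => ∑ k ∈ range (n + 1), Tc θ k * y k with hGbdef
  have hGacont : Continuous Ga := by
    rw [hGadef]
    exact continuous_finset_sum _ fun k _ => (Tc_cont k).mul continuous_const
  have hGbcont : Continuous Gb := by
    rw [hGbdef]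
    exact continuous_finset_sum _ fun k _ => (Tc_cont k).mul continuous_const
  have hGaanti : ∀ θ θ' : ℝ, θ ≤ θ' → Ga θ' ≤ Ga θ := by
    intro θ θ' h
    exact Finset.sum_le_sum fun k hk => mul_le_mul_of_nonneg_right (Tc_anti h k) (hxnn k hk)
  have hGa0 : Ga 0 = 1 := by
    rw [hGadef, ← hsumx]
    refine Finset.sum_congr rfl fun k _ => ?_
    rw [Tc_eq_one (by positivity), one_mul]
  have hGb0 : Gb 0 = 1 := by
    rw [hGbdef, ← hsumy]
    refine Finset.sum_congr rfl fun k _ => ?_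
    rw [Tc_eq_one (by positivity), one_mul]
  have hGa1 : Ga 1 = 1 := by
    have h1 : Ga 1 = ∑ k ∈ range (n + 1), x k := by
      rw [hGadef]
      refine Finset.sum_congr rfl fun k _ => ?_
      rcases Nat.eq_zero_or_pos k with hk0 | hk0
      · subst hk0
        simp [hxdef]
      · rw [Tc_eq_one (by exact_mod_cast hk0), one_mul]
    rw [h1, hsumx]
  have hGatop : Ga ((n : ℝ) + 1) = 0 := by
    rw [hGadef]
    refine Finset.sum_eq_zero fun k hk => ?_
    rw [mem_range, Nat.lt_succ_iff] at hk
    rw [Tc_eq_zero (by exact_mod_cast add_le_add_left (Nat.cast_le.mpr hk) 1), zero_mul]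
  -- trivial case: Qa = 0 (hence Qb = 0)
  rcases le_or_gt Qa 0 with hQapos | hQapos
  · have hQaz : Qa = 0 := le_antisymm hQapos hQa0
    have hQbz : Qb = 0 := le_antisymm (by linarith) hQb0
    refine ⟨fun _ => 0, fun j _ => le_rfl, by simp, by simp [hQaz], by simp [hQbz]⟩
  -- main case: Qa > 0.  Find θ₁ with Ga θ₁ = Qa by the IVT.
  have hivt1 := intermediate_value_Icc' (by linarith : (1:ℝ) ≤ (n:ℝ) + 1)
    (hGacont.continuousOn (s := Set.Icc 1 ((n:ℝ) + 1)))
  have hmem1 : Qa ∈ Set.Icc (Ga ((n:ℝ) + 1)) (Ga 1) := by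
    rw [hGatop, hGa1]; exact ⟨hQa0, hQa1⟩
  obtain ⟨θ₁, hθ₁mem, hGaθ₁⟩ := hivt1 hmem1
  have hθ₁1 : (1:ℝ) ≤ θ₁ := hθ₁mem.1
  have hθ₁lt : θ₁ < (n:ℝ) + 1 := by
    rcases lt_or_eq_of_le hθ₁mem.2 with h | h
    · exact h
    · rw [h, hGatop] at hGaθ₁; linarith
  -- the floor of θ₁
  set m : ℕ := ⌊θ₁⌋₊ with hmdef
  have hm1 : 1 ≤ m := Nat.le_floor (by exact_mod_cast hθ₁1)
  have hmn : m ≤ n := by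
    have : m < n + 1 := (Nat.floor_lt (by linarith)).mpr (by push_cast; linarith)
    omega
  have hmle : (m:ℝ) ≤ θ₁ := Nat.floor_le (by linarith)
  have hmlt : θ₁ < (m:ℝ) + 1 := Nat.lt_floor_add_one θ₁
  have hm0 : (0:ℝ) < m := by exact_mod_cast hm1
  -- the quality threshold constant
  set c : ℝ := ((n:ℝ) - m) * π / ((m:ℝ) * (1 - π)) with hcdef
  have hid : ∀ k : ℕ, y k - c * x k = B k * ((m:ℝ) - k) / ((1 - π) * m) := by
    intro k
    rw [hxdef, hydef, hcdef]
    field_simp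
    ring
  -- key greedy inequality: the threshold rule at θ₁ minimizes the b-side probability
  have hterm : ∀ k ∈ range (n + 1),
      (Tc θ₁ k - q k) * y k ≤ (Tc θ₁ k - q k) * (c * x k) := by
    intro k hk
    rw [mem_range, Nat.lt_succ_iff] at hk
    have hqk := hq k hk
    have hexp : (Tc θ₁ k - q k) * y k - (Tc θ₁ k - q k) * (c * x k)
        = (Tc θ₁ k - q k) * (y k - c * x k) := by ring
    have hmain : (Tc θ₁ k - q k) * (y k - c * x k) ≤ 0 := by
      rcases lt_trichotomy k m with h1 | h1 | h1
      · -- below the threshold: the rule is 0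
        have hT : Tc θ₁ k = 0 := by
          refine Tc_eq_zero ?_
          have : (k:ℝ) + 1 ≤ m := by exact_mod_cast h1
          linarith
        have hyc : 0 ≤ y k - c * x k := by
          rw [hid k]
          have h2 : (0:ℝ) ≤ (m:ℝ) - k := by
            have : (k:ℝ) ≤ m := by exact_mod_cast le_of_lt h1
            linarith
          have h3 := hBnonneg k hk
          positivity
        rw [hT]
        linarith [mul_nonneg hqk.1 hyc]
      · rw [hid k, h1]
        simp
      · -- above the threshold: the rule is 1
        have hT : Tc θ₁ k = 1 := by
          refine Tc_eq_one ?_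
          have : (m:ℝ) + 1 ≤ k := by exact_mod_cast h1
          linarith
        have hyc : y k - c * x k ≤ 0 := by
          rw [hid k]
          have h2 : (m:ℝ) - k ≤ 0 := by
            have : (m:ℝ) ≤ k := by exact_mod_cast le_of_lt h1
            linarith
          have h3 := hBnonneg k hk
          have h4 : B k * ((m:ℝ) - k) ≤ 0 := mul_nonpos_of_nonneg_of_nonpos h3 h2
          exact div_nonpos_of_nonpos_of_nonneg h4 (by positivity)
        rw [hT]
        have h5 := mul_nonneg (show (0:ℝ) ≤ 1 - q k by linarith [hqk.2])
          (show (0:ℝ) ≤ -(y k - c * x k) by linarith)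
        linarith
    linarith
  have hsumTx : ∑ k ∈ range (n + 1), (Tc θ₁ k - q k) * x k = 0 := by
    have h1 : ∑ k ∈ range (n + 1), (Tc θ₁ k - q k) * x k
        = Ga θ₁ - ∑ k ∈ range (n + 1), q k * x k := by
      rw [hGadef, ← Finset.sum_sub_distrib]
      exact Finset.sum_congr rfl fun k _ => by ring
    rw [h1, hGaθ₁, hQax, sub_self]
  have hGbθ₁ : Gb θ₁ ≤ Qb := by
    have h1 : Gb θ₁ - Qb = ∑ k ∈ range (n + 1), (Tc θ₁ k - q k) * y k := by
      rw [hGbdef, ← hQby, ← Finset.sum_sub_distrib]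
      exact Finset.sum_congr rfl fun k _ => by ring
    have h2 : ∑ k ∈ range (n + 1), (Tc θ₁ k - q k) * y k
        ≤ ∑ k ∈ range (n + 1), (Tc θ₁ k - q k) * (c * x k) := Finset.sum_le_sum hterm
    have h3 : ∑ k ∈ range (n + 1), (Tc θ₁ k - q k) * (c * x k)
        = c * ∑ k ∈ range (n + 1), (Tc θ₁ k - q k) * x k := by
      rw [Finset.mul_sum]
      exact Finset.sum_congr rfl fun k _ => by ring
    rw [hsumTx, mul_zero] at h3
    linarith
  -- second IVT: find θ̂ on the lower boundary ray
  set H : ℝ → ℝ := fun θ => Qb * Ga θ - Qa * Gb θ with hHdef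
  have hHcont : Continuous H := by
    rw [hHdef]
    exact (continuous_const.mul hGacont).sub (continuous_const.mul hGbcont)
  have hH0 : H 0 ≤ 0 := by rw [hHdef]; simp only [hGa0, hGb0]; linarith
  have hHθ₁ : 0 ≤ H θ₁ := by
    rw [hHdef]
    simp only [hGaθ₁]
    have h5 := mul_nonneg hQa0 (sub_nonneg.mpr hGbθ₁)
    linarith [mul_sub Qa Qb (Gb θ₁), h5]
  have hθ₁0 : (0:ℝ) ≤ θ₁ := by linarith
  have hivt2 := intermediate_value_Icc hθ₁0 (hHcont.continuousOn (s := Set.Icc 0 θ₁))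
  obtain ⟨θh, hθhmem, hHθh⟩ := hivt2 ⟨hH0, hHθ₁⟩
  have hGaθh : Qa ≤ Ga θh := by
    rw [← hGaθ₁]
    exact hGaanti θh θ₁ hθhmem.2
  have hGapos : 0 < Ga θh := lt_of_lt_of_le hQapos hGaθh
  -- the scaling factor
  set lam : ℝ := Qa / Ga θh with hlamdef
  have hlam0 : 0 ≤ lam := div_nonneg hQa0 (le_of_lt hGapos)
  have hlam1 : lam ≤ 1 := (div_le_one hGapos).mpr hGaθh
  have hlamGa : lam * Ga θh = Qa := by
    rw [hlamdef]
    field_simp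
  have hqb : Qa * Gb θh = Qb * Ga θh := by
    have : Qb * Ga θh - Qa * Gb θh = 0 := hHθh
    linarith
  have hlamGb : lam * Gb θh = Qb := by
    rw [hlamdef, div_mul_eq_mul_div, hqb, mul_div_assoc, div_self (ne_of_gt hGapos), mul_one]
  -- the convex weights, by Abel summation of the threshold rule
  set g : ℕ → ℝ := fun i => if i = 0 then 0 else Tc θh (i - 1) with hgdef
  set α : ℕ → ℝ := fun j => lam * (g (j + 1) - g j) with hαdef
  have hg : ∀ j : ℕ, g j ≤ g (j + 1) := by
    intro j
    rw [hgdef]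
    cases j with
    | zero => simpa using Tc_nonneg θh 0
    | succ i => simpa using Tc_mono θh (Nat.le_succ i)
  have hαnn : ∀ j : ℕ, 0 ≤ α j := by
    intro j
    rw [hαdef]
    exact mul_nonneg hlam0 (sub_nonneg.mpr (hg j))
  have hpartial : ∀ k : ℕ, ∑ j ∈ range (k + 1), α j = lam * Tc θh k := by
    intro k
    calc ∑ j ∈ range (k + 1), α j
        = lam * ∑ j ∈ range (k + 1), (g (j + 1) - g j) := by
          rw [Finset.mul_sum]
      _ = lam * (g (k + 1) - g 0) := by rw [Finset.sum_range_sub]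
      _ = lam * Tc θh k := by rw [hgdef]; simp
  have hsumα : ∑ j ∈ range (n + 1), α j ≤ 1 := by
    rw [hpartial n]
    calc lam * Tc θh n ≤ lam * 1 := mul_le_mul_of_nonneg_left (Tc_le_one θh n) hlam0
      _ = lam := mul_one lam
      _ ≤ 1 := hlam1
  have key : ∀ z : ℕ → ℝ,
      ∑ j ∈ range (n + 1), α j * ∑ k ∈ Icc j n, z k
        = lam * ∑ k ∈ range (n + 1), Tc θh k * z k := by
    intro z
    calc ∑ j ∈ range (n + 1), α j * ∑ k ∈ Icc j n, z k
        = ∑ j ∈ range (n + 1), ∑ k ∈ Icc j n, α j * z k :=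
          Finset.sum_congr rfl fun j _ => Finset.mul_sum _ _ _
      _ = ∑ k ∈ range (n + 1), ∑ j ∈ range (k + 1), α j * z k := sum_swap_aux n _
      _ = ∑ k ∈ range (n + 1), lam * Tc θh k * z k :=
          Finset.sum_congr rfl fun k _ => by rw [← Finset.sum_mul, hpartial k]
      _ = lam * ∑ k ∈ range (n + 1), Tc θh k * z k := by
          rw [Finset.mul_sum]
          exact Finset.sum_congr rfl fun k _ => by ring
  refine ⟨α, fun j _ => hαnn j, hsumα, ?_, ?_⟩
  · have h1 : ∑ j ∈ range (n + 1), α j * ((1 / (↑n * π)) * ∑ k ∈ Icc j n, (k:ℝ) * B k)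
        = ∑ j ∈ range (n + 1), α j * ∑ k ∈ Icc j n, x k := by
      refine Finset.sum_congr rfl fun j _ => ?_
      rw [Finset.mul_sum]
    rw [h1, key x]
    have h2 : ∑ k ∈ range (n + 1), Tc θh k * x k = Ga θh := by rw [hGadef]
    rw [h2, hlamGa]
  · have h1 : ∑ j ∈ range (n + 1), α j * ((1 / (↑n * (1 - π))) * ∑ k ∈ Icc j n, ((n:ℝ) - k) * B k)
        = ∑ j ∈ range (n + 1), α j * ∑ k ∈ Icc j n, y k := by
      refine Finset.sum_congr rfl fun j _ => ?_
      rw [Finset.mul_sum]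
    rw [h1, key y]
    have h2 : ∑ k ∈ range (n + 1), Tc θh k * y k = Gb θh := by rw [hGbdef]
    rw [h2, hlamGb]
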